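/- Let ℓ, ℓ', m, n be nonnegative integers with m ≤ ℓ and n ≤ ℓ'. Then ((ℓ+ℓ'+2)/(ℓ+1)) · m(m+1)/2 + ((ℓ+ℓ'+2)/(ℓ'+1)) · n(n+1)/2 + (ℓ+ℓ'+2)/2 ≥ (m+n+1)(m+n+2)/2. -/

import Mathlib

/-- For nonnegative integers ℓ, ℓ', m, n with m ≤ ℓ and n ≤ ℓ',
((ℓ+ℓ'+2)/(ℓ+1))·m(m+1)/2 + ((ℓ+ℓ'+2)/(ℓ'+1))·n(n+1)/2 + (ℓ+ℓ'+2)/2 ≥ (m+n+1)(m+n+2)/2. -/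
theorem stmt_16 (l l' m n : ℕ) (hm : m ≤ l) (hn : n ≤ l') :
    ((m : ℝ) + n + 1) * ((m : ℝ) + n + 2) / 2 ≤
      (((l : ℝ) + l' + 2) / ((l : ℝ) + 1)) * ((m : ℝ) * ((m : ℝ) + 1) / 2) +
        (((l : ℝ) + l' + 2) / ((l' : ℝ) + 1)) * ((n : ℝ) * ((n : ℝ) + 1) / 2) +
        ((l : ℝ) + l' + 2) / 2 := by
  have hm' : (m : ℝ) ≤ l := by exact_mod_cast hm
  have hn' : (n : ℝ) ≤ l' := by exact_mod_cast hn
  have hm0 : (0:ℝ) ≤ m := Nat.cast_nonneg m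
  have hn0 : (0:ℝ) ≤ n := Nat.cast_nonneg n
  have ha : (0:ℝ) < (l:ℝ) + 1 := by positivity
  have hb : (0:ℝ) < (l':ℝ) + 1 := by positivity
  have h2 : (0:ℝ) < 2*((l:ℝ)+1)*((l':ℝ)+1) := by positivity
  rw [← mul_le_mul_iff_of_pos_right h2]
  have e1 : (((l : ℝ) + l' + 2) / ((l : ℝ) + 1)) * ((m : ℝ) * ((m : ℝ) + 1) / 2) +
        (((l : ℝ) + l' + 2) / ((l' : ℝ) + 1)) * ((n : ℝ) * ((n : ℝ) + 1) / 2) +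
        ((l : ℝ) + l' + 2) / 2 =
      (((l:ℝ)+l'+2) * ((m:ℝ)*(m+1)*((l':ℝ)+1) + (n:ℝ)*(n+1)*((l:ℝ)+1) + ((l:ℝ)+1)*((l':ℝ)+1))) /
        (2*((l:ℝ)+1)*((l':ℝ)+1)) := by
    field_simp
  rw [e1, div_mul_cancel₀ _ (ne_of_gt h2)]
  nlinarith [sq_nonneg (((l':ℝ)+1)*((l:ℝ)-m) - ((l:ℝ)+1)*((l':ℝ)-n)),
    mul_nonneg (mul_nonneg (le_of_lt hb) (le_of_lt hb)) (sub_nonneg.2 hm'),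
    mul_nonneg (mul_nonneg (le_of_lt ha) (le_of_lt ha)) (sub_nonneg.2 hn')]
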